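/- arXiv:2605.00848 — 2 statements merged into one kernel-verified Lean document; each statement's English description precedes it below -/
import Mathlib

section
/- Let x : ℝ → ℂ be both integrable and square-integrable. Then for every ω ∈ ℝ, the Fourier transform of the autocorrelation of x evaluated at ω equals the squared modulus of the Fourier transform of x at ω: ∫_ℝ R_xx(Δ) e^{-2πiωΔ} dΔ = |x̂(ω)|², where R_xx(Δ) = ∫_ℝ x(u+Δ) · conj(x(u)) du. -/
open MeasureTheory

/-- The Fourier transform `x̂(ω) = ∫ x(t) e^{-2πiωt} dt` of an integrable function. -/
noncomputable def fourierTransform (x : ℝ → ℂ) (ω : ℝ) : ℂ :=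
  ∫ t : ℝ, x t * Complex.exp (-2 * Real.pi * Complex.I * ω * t)

/-- Wiener–Khinchin: for `x ∈ L¹ ∩ L²(ℝ)` and every `ω`, the Fourier
transform of the autocorrelation `R_xx(Δ) = ∫ x(u+Δ) conj(x(u)) du` at `ω` equals
`|x̂(ω)|²`. -/
theorem fourier_autocorrelation_eq_normSq_fourier
    (x : ℝ → ℂ) (hx1 : Integrable x (volume : Measure ℝ))
    (hx2 : MemLp x 2 (volume : Measure ℝ)) (ω : ℝ) :
    (∫ Δ : ℝ, (∫ u : ℝ, x (u + Δ) * (starRingEnd ℂ) (x u)) *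
        Complex.exp (-2 * Real.pi * Complex.I * ω * Δ)) =
      ((‖fourierTransform x ω‖ ^ 2 : ℝ) : ℂ) := by
  classical
  set E : ℝ → ℂ := fun t => Complex.exp (-2 * Real.pi * Complex.I * ω * t) with hEdef
  set g : ℝ → ℂ := fun t => x t * E t with hgdef
  have hEcont : Continuous E := by
    apply Complex.continuous_exp.comp
    continuity
  have hEnorm : ∀ t : ℝ, ‖E t‖ = 1 := by
    intro t
    have : (-2 * (Real.pi : ℂ) * Complex.I * ω * t) = ((-2 * Real.pi * ω * t : ℝ) : ℂ) * Complex.I := by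
      push_cast; ring
    rw [hEdef]
    simp only [this]
    rw [Complex.norm_exp_ofReal_mul_I]
  have hg1 : Integrable g volume := by
    have h := hx1.bdd_mul hEcont.aestronglyMeasurable (c := 1) (Filter.Eventually.of_forall fun t => le_of_eq (hEnorm t))
    exact h.congr (Filter.Eventually.of_forall fun t => mul_comm _ _)
  -- key pointwise identity
  have hkey : ∀ Δ u : ℝ, g (u + Δ) * (starRingEnd ℂ) (g u)
      = x (u + Δ) * (starRingEnd ℂ) (x u) * E Δ := by
    intro Δ u
    rw [hgdef, hEdef]
    simp only [map_mul, ← Complex.exp_conj, map_neg, map_ofNat, Complex.conj_I,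
      Complex.conj_ofReal, map_mul]
    rw [mul_mul_mul_comm, ← Complex.exp_add]
    congr 1
    push_cast
    ring
  have h1 : ∀ Δ : ℝ, ∫ u : ℝ, g (u + Δ) * (starRingEnd ℂ) (g u)
      = (∫ u : ℝ, x (u + Δ) * (starRingEnd ℂ) (x u)) * E Δ := by
    intro Δ
    simp_rw [hkey Δ]
    exact integral_mul_const _ _
  -- the product function is integrable on ℝ × ℝ
  have hgc1 : Integrable (fun t => (starRingEnd ℂ) (g t)) volume := by
    have hm : AEStronglyMeasurable (fun t => (starRingEnd ℂ) (g t)) volume :=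
      continuous_star.comp_aestronglyMeasurable hg1.aestronglyMeasurable
    exact (hg1.norm).mono' hm (Filter.Eventually.of_forall fun t => by simp)
  have hH : Integrable (fun p : ℝ × ℝ => g p.1 * (starRingEnd ℂ) (g p.2))
      ((volume : Measure ℝ).prod volume) := hg1.mul_prod hgc1
  -- the shear map (Δ, u) ↦ (u + Δ, u) is measure preserving
  have he : MeasurePreserving (fun p : ℝ × ℝ => (p.2 + p.1, p.2))
      ((volume : Measure ℝ).prod volume) ((volume : Measure ℝ).prod volume) := by
    have h := Measure.measurePreserving_swap.comp
      ((measurePreserving_prod_add (volume : Measure ℝ) volume).comp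
        (Measure.measurePreserving_swap (μ := (volume : Measure ℝ)) (ν := (volume : Measure ℝ))))
    exact h
  have hHe : Integrable (fun p : ℝ × ℝ => g (p.2 + p.1) * (starRingEnd ℂ) (g p.2))
      ((volume : Measure ℝ).prod volume) := by
    have h0 : Integrable (fun p : ℝ × ℝ => g p.1 * (starRingEnd ℂ) (g p.2))
        (Measure.map (fun p : ℝ × ℝ => (p.2 + p.1, p.2)) ((volume : Measure ℝ).prod volume)) := by
      rw [he.map_eq]; exact hH
    rw [integrable_map_measure (he.map_eq.symm ▸ hH.aestronglyMeasurable)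
      he.measurable.aemeasurable] at h0
    exact h0
  have h2 : ∫ Δ : ℝ, ∫ u : ℝ, g (u + Δ) * (starRingEnd ℂ) (g u)
      = ∫ p : ℝ × ℝ, g (p.2 + p.1) * (starRingEnd ℂ) (g p.2)
        ∂((volume : Measure ℝ).prod volume) :=
    integral_integral hHe
  have h3 : ∫ p : ℝ × ℝ, g (p.2 + p.1) * (starRingEnd ℂ) (g p.2)
        ∂((volume : Measure ℝ).prod volume)
      = ∫ p : ℝ × ℝ, g p.1 * (starRingEnd ℂ) (g p.2)
        ∂((volume : Measure ℝ).prod volume) := by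
    conv_rhs => rw [← he.map_eq]
    rw [integral_map he.measurable.aemeasurable (he.map_eq.symm ▸ hH.aestronglyMeasurable)]
  have h4 : ∫ p : ℝ × ℝ, g p.1 * (starRingEnd ℂ) (g p.2)
        ∂((volume : Measure ℝ).prod volume)
      = (∫ t : ℝ, g t) * ∫ t : ℝ, (starRingEnd ℂ) (g t) :=
    integral_prod_mul g (fun t => (starRingEnd ℂ) (g t))
  have hft : (∫ t : ℝ, g t) = fourierTransform x ω := rfl
  calc (∫ Δ : ℝ, (∫ u : ℝ, x (u + Δ) * (starRingEnd ℂ) (x u)) *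
        Complex.exp (-2 * Real.pi * Complex.I * ω * Δ))
      = ∫ Δ : ℝ, ∫ u : ℝ, g (u + Δ) * (starRingEnd ℂ) (g u) := by
        refine integral_congr_ae (Filter.Eventually.of_forall fun Δ => ?_)
        exact (h1 Δ).symm
    _ = (∫ t : ℝ, g t) * ∫ t : ℝ, (starRingEnd ℂ) (g t) := by rw [h2, h3, h4]
    _ = fourierTransform x ω * (starRingEnd ℂ) (fourierTransform x ω) := by
        rw [integral_conj, hft]
    _ = ((‖fourierTransform x ω‖ ^ 2 : ℝ) : ℂ) := by
        rw [Complex.mul_conj, Complex.normSq_eq_norm_sq]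
end

section
/- Heisenberg–Robertson uncertainty inequality for time and frequency: let f : ℝ → ℂ be a Schwartz function. Then ( ∫_ℝ |f(t)|² dt )² ≤ 4 · ( ∫_ℝ t² |f(t)|² dt ) · ( ∫_ℝ |f'(t)|² dt ). In particular, if ‖f‖_{L²} = 1, then the product of the time spread Δt² = ∫ t²|f(t)|² dt and the frequency spread Δω² = ∫ |f'(t)|² dt is at least 1/4, i.e., Δω·Δt ≥ 1/2. -/
open MeasureTheory SchwartzMap

/-- Heisenberg–Robertson uncertainty inequality: for a Schwartz
function `f`, `(∫ |f|²)² ≤ 4 (∫ t²|f(t)|² dt)(∫ |f'(t)|² dt)`; in particular, if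
`‖f‖_{L²} = 1` then `Δt²·Δω² ≥ 1/4`. -/
theorem heisenberg_robertson_uncertainty (f : SchwartzMap ℝ ℂ) :
    (∫ t : ℝ, ‖f t‖ ^ 2) ^ 2 ≤
      4 * ((∫ t : ℝ, t ^ 2 * ‖f t‖ ^ 2) * ∫ t : ℝ, ‖deriv (⇑f) t‖ ^ 2) ∧
    ((∫ t : ℝ, ‖f t‖ ^ 2) = 1 →
      1 / 4 ≤ (∫ t : ℝ, t ^ 2 * ‖f t‖ ^ 2) * ∫ t : ℝ, ‖deriv (⇑f) t‖ ^ 2) := by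
  set f' : SchwartzMap ℝ ℂ := SchwartzMap.derivCLM ℝ ℂ f with hf'
  have hderiv : ∀ t, HasDerivAt f (f' t) t := by
    intro t
    rw [hf', SchwartzMap.derivCLM_apply]
    exact ((f.smooth ⊤).differentiable (by simp) t).hasDerivAt
  have hderiv_eq : ∀ t, deriv (⇑f) t = f' t := fun t => ((hderiv t).deriv).symm
  set C : ℝ := (SchwartzMap.seminorm ℝ 0 0) f with hC
  set C' : ℝ := (SchwartzMap.seminorm ℝ 0 0) f' with hC'
  have hCf : ∀ t, ‖f t‖ ≤ C := fun t => f.norm_le_seminorm ℝ t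
  have hCf' : ∀ t, ‖f' t‖ ≤ C' := fun t => f'.norm_le_seminorm ℝ t
  have hC0 : 0 ≤ C := le_trans (norm_nonneg _) (hCf 0)
  have hC'0 : 0 ≤ C' := le_trans (norm_nonneg _) (hCf' 0)
  have hcontf : Continuous (⇑f) := f.continuous
  have hcontf' : Continuous (⇑f') := f'.continuous
  have hcont_inner : Continuous (fun t : ℝ => (inner ℝ (f t) (f' t) : ℝ)) :=
    hcontf.inner hcontf'
  have hint0 : Integrable (fun t : ℝ => ‖f t‖) := by
    simpa using f.integrable_pow_mul volume 0
  have hint1 : Integrable (fun t : ℝ => ‖t‖ * ‖f t‖) := by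
    simpa using f.integrable_pow_mul volume 1
  have hint2 : Integrable (fun t : ℝ => ‖t‖ ^ 2 * ‖f t‖) := f.integrable_pow_mul volume 2
  have hintf'0 : Integrable (fun t : ℝ => ‖f' t‖) := by
    simpa using f'.integrable_pow_mul volume 0
  have hIsq : Integrable (fun t : ℝ => ‖f t‖ ^ 2) := by
    refine (hint0.const_mul C).mono' (hcontf.norm.pow 2).aestronglyMeasurable ?_
    filter_upwards with t
    rw [Real.norm_of_nonneg (by positivity), sq]
    exact mul_le_mul_of_nonneg_right (hCf t) (norm_nonneg _)
  have hIsq' : Integrable (fun t : ℝ => ‖f' t‖ ^ 2) := by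
    refine (hintf'0.const_mul C').mono' (hcontf'.norm.pow 2).aestronglyMeasurable ?_
    filter_upwards with t
    rw [Real.norm_of_nonneg (by positivity), sq]
    exact mul_le_mul_of_nonneg_right (hCf' t) (norm_nonneg _)
  have hA : Integrable (fun t : ℝ => t ^ 2 * ‖f t‖ ^ 2) := by
    refine (hint2.const_mul C).mono'
      (((continuous_id.pow 2).mul (hcontf.norm.pow 2)).aestronglyMeasurable) ?_
    filter_upwards with t
    rw [Real.norm_of_nonneg (by positivity)]
    calc t ^ 2 * ‖f t‖ ^ 2 = (‖t‖ ^ 2 * ‖f t‖) * ‖f t‖ := by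
          rw [Real.norm_eq_abs, sq_abs]; ring
      _ ≤ (‖t‖ ^ 2 * ‖f t‖) * C := mul_le_mul_of_nonneg_left (hCf t) (by positivity)
      _ = C * (‖t‖ ^ 2 * ‖f t‖) := by ring
  have hg : ∀ t : ℝ, HasDerivAt (fun s : ℝ => s * ‖f s‖ ^ 2)
      (1 * ‖f t‖ ^ 2 + t * (2 * inner ℝ (f t) (f' t))) t :=
    fun t => (hasDerivAt_id t).mul ((hderiv t).norm_sq)
  have habs : ∀ t : ℝ, |t * (2 * inner ℝ (f t) (f' t))| ≤ 2 * ((|t| * ‖f t‖) * ‖f' t‖) := by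
    intro t
    rw [abs_mul, abs_mul, abs_two]
    calc |t| * (2 * |(inner ℝ (f t) (f' t) : ℝ)|) ≤ |t| * (2 * (‖f t‖ * ‖f' t‖)) := by
          gcongr
          exact abs_real_inner_le_norm _ _
      _ = 2 * ((|t| * ‖f t‖) * ‖f' t‖) := by ring
  have hb_int : Integrable (fun t : ℝ => t * (2 * inner ℝ (f t) (f' t))) := by
    refine (hint1.const_mul (2 * C')).mono'
      ((continuous_id.mul (continuous_const.mul hcont_inner)).aestronglyMeasurable) ?_
    filter_upwards with t
    rw [Real.norm_eq_abs]
    refine (habs t).trans ?_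
    calc 2 * ((|t| * ‖f t‖) * ‖f' t‖) ≤ 2 * ((|t| * ‖f t‖) * C') := by
          gcongr
          exact hCf' t
      _ = 2 * C' * (‖t‖ * ‖f t‖) := by rw [Real.norm_eq_abs]; ring
  have hprod_int : Integrable (fun t : ℝ => 2 * ((|t| * ‖f t‖) * ‖f' t‖)) := by
    refine (hint1.const_mul (2 * C')).mono'
      ((continuous_const.mul (((continuous_abs.mul hcontf.norm)).mul
        hcontf'.norm)).aestronglyMeasurable) ?_
    filter_upwards with t
    rw [Real.norm_of_nonneg (by positivity)]
    calc 2 * ((|t| * ‖f t‖) * ‖f' t‖) ≤ 2 * ((|t| * ‖f t‖) * C') := by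
          gcongr
          exact hCf' t
      _ = 2 * C' * (‖t‖ * ‖f t‖) := by rw [Real.norm_eq_abs]; ring
  have hg'_int : Integrable (fun t : ℝ =>
      1 * ‖f t‖ ^ 2 + t * (2 * inner ℝ (f t) (f' t))) := by
    exact (hIsq.const_mul 1).add hb_int
  have hg_int : Integrable (fun t : ℝ => t * ‖f t‖ ^ 2) := by
    refine (hint1.const_mul C).mono'
      ((continuous_id.mul (hcontf.norm.pow 2)).aestronglyMeasurable) ?_
    filter_upwards with t
    have : |t * ‖f t‖ ^ 2| = |t| * ‖f t‖ ^ 2 := by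
      rw [abs_mul, abs_of_nonneg (pow_nonneg (norm_nonneg _) 2)]
    rw [Real.norm_eq_abs, this]
    calc |t| * ‖f t‖ ^ 2 = (|t| * ‖f t‖) * ‖f t‖ := by ring
      _ ≤ (|t| * ‖f t‖) * C := mul_le_mul_of_nonneg_left (hCf t) (by positivity)
      _ = C * (‖t‖ * ‖f t‖) := by rw [Real.norm_eq_abs]; ring
  have hzero : (∫ t : ℝ, (1 * ‖f t‖ ^ 2 + t * (2 * inner ℝ (f t) (f' t)))) = 0 :=
    integral_eq_zero_of_hasDerivAt_of_integrable hg hg'_int hg_int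
  rw [integral_add (hIsq.const_mul 1) hb_int] at hzero
  simp only [one_mul] at hzero
  set I : ℝ := ∫ t : ℝ, ‖f t‖ ^ 2 with hI
  set A : ℝ := ∫ t : ℝ, t ^ 2 * ‖f t‖ ^ 2 with hAdef
  set B : ℝ := ∫ t : ℝ, ‖deriv (⇑f) t‖ ^ 2 with hBdef
  have hB_eq : B = ∫ t : ℝ, ‖f' t‖ ^ 2 := by
    rw [hBdef]
    exact integral_congr_ae (Filter.Eventually.of_forall fun t => by show ‖deriv (⇑f) t‖ ^ 2 = ‖f' t‖ ^ 2; rw [hderiv_eq t])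
  have hI_eq : I = -∫ t : ℝ, t * (2 * inner ℝ (f t) (f' t)) := by linarith
  have hmem1 : MemLp (fun t : ℝ => |t| * ‖f t‖) (ENNReal.ofReal 2) volume := by
    rw [show ENNReal.ofReal 2 = 2 by norm_num]
    refine (memLp_two_iff_integrable_sq
      ((continuous_abs.mul hcontf.norm).aestronglyMeasurable)).2 ?_
    refine hA.congr ?_
    filter_upwards with t
    show t ^ 2 * ‖f t‖ ^ 2 = (|t| * ‖f t‖) ^ 2
    rw [mul_pow, sq_abs]
  have hmem2 : MemLp (fun t : ℝ => ‖f' t‖) (ENNReal.ofReal 2) volume := by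
    rw [show ENNReal.ofReal 2 = 2 by norm_num]
    exact (memLp_two_iff_integrable_sq hcontf'.norm.aestronglyMeasurable).2 hIsq'
  have hconj : Real.HolderConjugate 2 2 := Real.HolderConjugate.two_two
  have holder := integral_mul_le_Lp_mul_Lq_of_nonneg hconj
    (μ := volume) (f := fun t : ℝ => |t| * ‖f t‖) (g := fun t : ℝ => ‖f' t‖)
    (Filter.Eventually.of_forall fun t => by positivity)
    (Filter.Eventually.of_forall fun t => norm_nonneg _) hmem1 hmem2
  have hA_rpow : (∫ t : ℝ, (|t| * ‖f t‖) ^ (2:ℝ)) = A := by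
    rw [hAdef]; congr 1; ext t
    rw [show ((2:ℝ)) = ((2:ℕ):ℝ) by norm_num, Real.rpow_natCast, mul_pow, sq_abs]
  have hB_rpow : (∫ t : ℝ, ‖f' t‖ ^ (2:ℝ)) = B := by
    rw [hB_eq]; congr 1; ext t
    rw [show ((2:ℝ)) = ((2:ℕ):ℝ) by norm_num, Real.rpow_natCast]
  rw [hA_rpow, hB_rpow] at holder
  have hbound : I ≤ 2 * (A ^ ((1:ℝ)/2) * B ^ ((1:ℝ)/2)) := by
    rw [hI_eq]
    have h1 : -∫ t : ℝ, t * (2 * inner ℝ (f t) (f' t))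
        ≤ ∫ t : ℝ, |t * (2 * inner ℝ (f t) (f' t))| := by
      refine (neg_le_abs _).trans ?_
      rw [← Real.norm_eq_abs]
      refine (norm_integral_le_integral_norm _).trans ?_
      simp only [Real.norm_eq_abs]
      exact le_rfl
    have h2 : (∫ t : ℝ, |t * (2 * inner ℝ (f t) (f' t))|)
        ≤ ∫ t : ℝ, 2 * ((|t| * ‖f t‖) * ‖f' t‖) :=
      integral_mono hb_int.abs hprod_int habs
    have h3 : (∫ t : ℝ, 2 * ((|t| * ‖f t‖) * ‖f' t‖))
        = 2 * ∫ t : ℝ, (|t| * ‖f t‖) * ‖f' t‖ := integral_const_mul 2 _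
    have h4 : (∫ t : ℝ, (|t| * ‖f t‖) * ‖f' t‖) ≤ A ^ ((1:ℝ)/2) * B ^ ((1:ℝ)/2) := holder
    linarith
  have hAnn : 0 ≤ A := by rw [hAdef]; positivity
  have hBnn : 0 ≤ B := by rw [hB_eq]; positivity
  have hInn : 0 ≤ I := by rw [hI]; positivity
  have hsq : I ^ 2 ≤ 4 * (A * B) := by
    calc I ^ 2 ≤ (2 * (A ^ ((1:ℝ)/2) * B ^ ((1:ℝ)/2))) ^ 2 :=
          pow_le_pow_left₀ hInn hbound 2
      _ = 4 * ((A ^ ((1:ℝ)/2)) ^ 2 * (B ^ ((1:ℝ)/2)) ^ 2) := by ring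
      _ = 4 * (A * B) := by
          rw [← Real.rpow_natCast (A ^ ((1:ℝ)/2)) 2, ← Real.rpow_natCast (B ^ ((1:ℝ)/2)) 2,
            ← Real.rpow_mul hAnn, ← Real.rpow_mul hBnn]
          norm_num
  exact ⟨hsq, fun h1 => by rw [h1] at hsq; nlinarith⟩
end
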